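/- With notation as in the context, suppose eM is a free 𝒪-module of rank 1, and choose m ∈ M with eM = 𝒪·(em). Then the assignment x ↦ x·m induces a well-defined surjective 𝒪-module homomorphism C_0^λ(T) = eT/(eT ∩ T) → C_0^λ(M) = eM/(eM ∩ M). -/

import Mathlib

/-- The `𝒪`-submodule `e·T` of `T_E`. -/
noncomputable def eTsub (O T TE : Type*) [CommRing O] [CommRing T] [CommRing TE]
    [Algebra O T] [Algebra O TE] [Algebra T TE] [IsScalarTower O T TE] (e : TE) :
    Submodule O TE :=
  Submodule.span O {x : TE | ∃ t : T, x = e * algebraMap T TE t}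

/-- The congruence module `C₀^λ(T) = e·T/(e·T ∩ T)`, formed inside `T_E`. -/
noncomputable abbrev C0T (O T TE : Type*) [CommRing O] [CommRing T] [CommRing TE]
    [Algebra O T] [Algebra O TE] [Algebra T TE] [IsScalarTower O T TE] (e : TE) :=
  ↥(eTsub O T TE e) ⧸
    (Submodule.comap (eTsub O T TE e).subtype
      (eTsub O T TE e ⊓ LinearMap.range ((IsScalarTower.toAlgHom O T TE).toLinearMap)))

/-- The class of `e·t` in `C₀^λ(T)`. -/
noncomputable def clsT (O T TE : Type*) [CommRing O] [CommRing T] [CommRing TE]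
    [Algebra O T] [Algebra O TE] [Algebra T TE] [IsScalarTower O T TE] (e : TE) (t : T) :
    C0T O T TE e :=
  Submodule.Quotient.mk ⟨e * algebraMap T TE t, Submodule.subset_span ⟨t, rfl⟩⟩

/-- The `𝒪`-submodule `e·M` of `M_E`. -/
noncomputable def eMsub {O TE M ME : Type*} [CommRing O] [CommRing TE] [Algebra O TE]
    [AddCommGroup M] [Module O M] [AddCommGroup ME] [Module O ME] [Module TE ME]
    [IsScalarTower O TE ME] (e : TE) (iota : M →ₗ[O] ME) : Submodule O ME :=
  Submodule.span O {x : ME | ∃ m : M, x = e • iota m}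

/-- The congruence module `C₀^λ(M) = e·M/(e·M ∩ M)`, formed inside `M_E`. -/
noncomputable abbrev C0M {O TE M ME : Type*} [CommRing O] [CommRing TE] [Algebra O TE]
    [AddCommGroup M] [Module O M] [AddCommGroup ME] [Module O ME] [Module TE ME]
    [IsScalarTower O TE ME] (e : TE) (iota : M →ₗ[O] ME) :=
  ↥(eMsub e iota) ⧸
    (Submodule.comap (eMsub e iota).subtype (eMsub e iota ⊓ LinearMap.range iota))

/-- The class of `e·m` in `C₀^λ(M)`. -/
noncomputable def clsM {O TE M ME : Type*} [CommRing O] [CommRing TE] [Algebra O TE]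
    [AddCommGroup M] [Module O M] [AddCommGroup ME] [Module O ME] [Module TE ME]
    [IsScalarTower O TE ME] (e : TE) (iota : M →ₗ[O] ME) (m : M) : C0M e iota :=
  Submodule.Quotient.mk ⟨e • iota m, Submodule.subset_span ⟨m, rfl⟩⟩

/-- In the standard congruence-module setup, if `e·M` is a free
`𝒪`-module of rank `1`, generated by `e·m₀` for some `m₀ ∈ M`, then `x ↦ x·m₀` induces a
well-defined surjective `𝒪`-linear map `C₀^λ(T) = eT/(eT ∩ T) → C₀^λ(M) = eM/(eM ∩ M)`. -/
theorem statement7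
    {O : Type*} [CommRing O] [IsDomain O] [IsDiscreteValuationRing O]
    [IsAdicComplete (IsLocalRing.maximalIdeal O) O]
    {E : Type*} [Field E] [Algebra O E] [IsFractionRing O E]
    {T : Type*} [CommRing T] [IsReduced T] [IsLocalRing T]
    [Algebra O T] [Module.Finite O T] [Module.Flat O T]
    {TE : Type*} [CommRing TE] [Algebra T TE] [Algebra O TE] [Algebra E TE]
    [IsScalarTower O T TE] [IsScalarTower O E TE]
    [IsLocalization (Algebra.algebraMapSubmonoid T (nonZeroDivisors O)) TE]
    (lam : T →ₐ[O] O)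
    (lamE : TE →ₐ[E] E) (e : TE)
    (hlamE : ∀ t : T, lamE (algebraMap T TE t) = algebraMap O E (lam t))
    (he1 : lamE e = 1)
    (he2 : ∀ P : Ideal TE, P.IsPrime → P ≠ RingHom.ker lamE → e ∈ P)
    {M : Type*} [AddCommGroup M] [Module O M] [Module T M] [IsScalarTower O T M]
    [Module.Finite T M] [Module.Free O M]
    {ME : Type*} [AddCommGroup ME] [Module O ME] [Module TE ME] [IsScalarTower O TE ME]
    (iota : M →ₗ[O] ME) [IsLocalizedModule (nonZeroDivisors O) iota]
    (hiota : ∀ (t : T) (m : M), iota (t • m) = algebraMap T TE t • iota m)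
    (m0 : M) (hm0 : ∀ x ∈ eMsub e iota, ∃ c : O, x = c • (e • iota m0)) :
    ∃ f : (C0T O T TE e) →ₗ[O] (C0M e iota),
      Function.Surjective f ∧ ∀ t : T, f (clsT O T TE e t) = clsM e iota (t • m0) := by
  classical
  have key : ∀ x ∈ eTsub O T TE e, x • iota m0 ∈ eMsub e iota := by
    intro x hx
    induction hx using Submodule.span_induction with
    | mem x hx =>
        obtain ⟨t, rfl⟩ := hx
        exact Submodule.subset_span ⟨t • m0, by rw [hiota, mul_smul]⟩
    | zero => simp
    | add x y _ _ hx hy => rw [add_smul]; exact (eMsub e iota).add_mem hx hy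
    | smul c x _ hx => rw [smul_assoc]; exact (eMsub e iota).smul_mem c hx
  let φ : ↥(eTsub O T TE e) →ₗ[O] ↥(eMsub e iota) :=
    LinearMap.codRestrict (eMsub e iota)
      (((LinearMap.toSpanSingleton TE ME (iota m0)).restrictScalars O).comp
        (eTsub O T TE e).subtype)
      (fun x => key x.1 x.2)
  have hφval : ∀ x : ↥(eTsub O T TE e), (φ x : ME) = (x : TE) • iota m0 := fun _ => rfl
  set p := Submodule.comap (eTsub O T TE e).subtype
      (eTsub O T TE e ⊓ LinearMap.range ((IsScalarTower.toAlgHom O T TE).toLinearMap)) with hp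
  set q := Submodule.comap (eMsub e iota).subtype (eMsub e iota ⊓ LinearMap.range iota) with hq
  have hpq : p ≤ q.comap φ := by
    rintro ⟨x, hx⟩ hxp
    obtain ⟨-, t, ht⟩ := hxp
    refine ⟨(φ ⟨x, hx⟩).2, ⟨t • m0, ?_⟩⟩
    have hx' : algebraMap T TE t = x := ht
    rw [hiota, hx']
    rfl
  refine ⟨Submodule.mapQ p q φ hpq, ?_, ?_⟩
  · rintro y
    obtain ⟨⟨v, hv⟩, rfl⟩ := Submodule.Quotient.mk_surjective _ y
    obtain ⟨c, rfl⟩ := hm0 v hv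
    have heT : e ∈ eTsub O T TE e := Submodule.subset_span ⟨1, by simp⟩
    refine ⟨Submodule.Quotient.mk (c • ⟨e, heT⟩ : ↥(eTsub O T TE e)), ?_⟩
    rw [Submodule.mapQ_apply]
    congr 1
    ext
    rw [hφval]
    simp [smul_assoc]
  · intro t
    rw [clsT, Submodule.mapQ_apply]
    congr 1
    ext
    rw [hφval]
    show (e * algebraMap T TE t) • iota m0 = e • iota (t • m0)
    rw [hiota, mul_smul]
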